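/- Let G be a finite graph with a separation (X, Y) of order k = |X ∩ Y|, let F be a spanning tree of G (assume G connected), and set G_X = G[X] ∪ F. Then there exists a set A of at most k - 1 edges of F such that the k vertices of X ∩ Y lie in pairwise different components of F - A, and the graph G[X] ∪ (F - A) has the same cycle space dimension as G[X] (adding the trees of F - A creates no new cycles), so bn(G[X] ∪ (F - A)) = bn(G[X]). -/

import Mathlib

set_option linter.unusedSectionVars false

variable {V : Type*} [Fintype V] [DecidableEq V]

/-- An F2-cycle relative to an edge set `E`: a finite set of edges, all belonging to `E`,
in which every vertex has even degree. -/
def IsF2CycleIn (E : Set (Sym2 V)) (C : Finset (Sym2 V)) : Prop :=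
  (∀ e ∈ C, e ∈ E) ∧ ∀ v : V, Even ((C.filter (fun e => v ∈ e)).card)

/-- `B` generates the cycle space of the graph with edge set `E`: every F2-cycle is a
symmetric difference of a subfamily of `B`. -/
def GeneratesIn (E : Set (Sym2 V)) (B : List (Finset (Sym2 V))) : Prop :=
  ∀ C : Finset (Sym2 V), IsF2CycleIn E C →
    ∃ l : List (Finset (Sym2 V)), l.Sublist B ∧ C = l.foldr symmDiff ∅

/-- The basis number of the graph with edge set `E`: the least `k` such that some
family of F2-cycles generating the cycle space uses each edge at most `k` times. -/
noncomputable def bnSet (E : Set (Sym2 V)) : ℕ :=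
  sInf {k | ∃ B : List (Finset (Sym2 V)), (∀ X ∈ B, IsF2CycleIn E X) ∧
    GeneratesIn E B ∧ ∀ e : Sym2 V, B.countP (fun X => decide (e ∈ X)) ≤ k}

/-- The basis number of a graph. -/
noncomputable def SimpleGraph.bn (G : SimpleGraph V) : ℕ := bnSet G.edgeSet
/-- An F2-cycle of `G`. -/
def SimpleGraph.IsF2Cycle (G : SimpleGraph V) (C : Finset (Sym2 V)) : Prop :=
  IsF2CycleIn G.edgeSet C

/-- The restriction `G[X]` of `G` to a vertex set `X`, kept on the same vertex type
(only edges with both endpoints in `X` remain). -/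
def SimpleGraph.restrict (G : SimpleGraph V) (X : Set V) : SimpleGraph V where
  Adj u v := G.Adj u v ∧ u ∈ X ∧ v ∈ X
  symm := ⟨fun u v h => ⟨h.1.symm, h.2.2, h.2.1⟩⟩
  loopless := ⟨fun v h => G.irrefl h.1⟩

open SimpleGraph

lemma acyclic_mono' {G H : SimpleGraph V} (hle : H ≤ G) (hG : G.IsAcyclic) : H.IsAcyclic := by
  intro v c hc
  exact hG (c.map (Hom.ofLE hle)) (hc.map (fun _ _ h => h))

/-- Degree of a vertex in an edge set. -/
def degD (D : Finset (Sym2 V)) (v : V) : ℕ := (D.filter (fun e => v ∈ e)).card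

lemma card_mem_eq_two {e : Sym2 V} (he : ¬ e.IsDiag) :
    (Finset.univ.filter (fun v => v ∈ e)).card = 2 := by
  induction e using Sym2.inductionOn with
  | hf x y =>
    rw [Sym2.mk_isDiag_iff] at he
    have h : Finset.univ.filter (fun v => v ∈ s(x, y)) = {x, y} := by
      ext v; simp [Sym2.mem_iff]
    rw [h, Finset.card_insert_of_notMem (by simp [he]), Finset.card_singleton]

lemma handshake (D : Finset (Sym2 V)) (hD : ∀ e ∈ D, ¬ e.IsDiag) :
    ∑ v : V, degD D v = 2 * D.card := by
  unfold degD
  simp_rw [Finset.card_filter]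
  rw [Finset.sum_comm]
  calc ∑ e ∈ D, ∑ v : V, ite (v ∈ e) 1 0 = ∑ e ∈ D, 2 := by
        refine Finset.sum_congr rfl fun e he => ?_
        rw [← Finset.card_filter]
        exact card_mem_eq_two (hD e he)
    _ = 2 * D.card := by rw [Finset.sum_const, smul_eq_mul, mul_comm]

lemma reach_other {H : SimpleGraph V} {e : Sym2 V} (he : e ∈ H.edgeSet) {v w : V}
    (hv : v ∈ e) (hw : w ∈ e) : H.Reachable v w := by
  induction e using Sym2.inductionOn with
  | hf x y =>
    rw [Sym2.mem_iff] at hv hw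
    rw [mem_edgeSet] at he
    rcases hv with rfl | rfl <;> rcases hw with rfl | rfl
    · exact Reachable.refl _
    · exact he.reachable
    · exact he.symm.reachable
    · exact Reachable.refl _

lemma parity_contradiction (H : SimpleGraph V) (D : Finset (Sym2 V))
    (hD : (D : Set (Sym2 V)) ⊆ H.edgeSet) (a : V)
    (hodd : Odd (degD D a))
    (heven : ∀ v, v ≠ a → H.Reachable a v → Even (degD D v)) : False := by
  classical
  set Da := D.filter (fun e => ∀ w ∈ e, H.Reachable a w) with hDadef
  have hDa_diag : ∀ e ∈ Da, ¬ e.IsDiag := fun e he =>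
    H.not_isDiag_of_mem_edgeSet (hD (Finset.mem_coe.mpr (Finset.mem_filter.mp he).1))
  have hdeg : ∀ v, H.Reachable a v → degD Da v = degD D v := by
    intro v hv
    unfold degD
    rw [hDadef, Finset.filter_filter]
    congr 1
    refine Finset.filter_congr fun e heD => ?_
    constructor
    · exact fun h => h.2
    · intro hve
      exact ⟨fun w hw => hv.trans (reach_other (hD (Finset.mem_coe.mpr heD)) hve hw), hve⟩
  have hzero : ∀ v, ¬ H.Reachable a v → degD Da v = 0 := by
    intro v hv
    unfold degD
    rw [Finset.card_eq_zero, Finset.filter_eq_empty_iff]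
    intro e he hve
    exact hv ((Finset.mem_filter.mp he).2 v hve)
  have hsum : Even (∑ v : V, degD Da v) := by
    rw [handshake Da hDa_diag]; exact even_two_mul _
  rw [← Finset.add_sum_erase _ _ (Finset.mem_univ a)] at hsum
  have htail : Even (∑ v ∈ Finset.univ.erase a, degD Da v) := by
    refine Finset.sum_induction _ Even (fun x y hx hy => hx.add hy) Even.zero ?_
    intro v hv
    rw [Finset.mem_erase] at hv
    by_cases hr : H.Reachable a v
    · rw [hdeg v hr]; exact heven v hv.1 hr
    · rw [hzero v hr]; exact Even.zero
  have hda : Odd (degD Da a) := by rw [hdeg a (Reachable.refl a)]; exact hodd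
  rw [Nat.even_add, Nat.even_iff, Nat.even_iff] at hsum
  rw [Nat.odd_iff] at hda
  rw [Nat.even_iff] at htail
  omega

lemma sep_aux (n : ℕ) : ∀ F' : SimpleGraph V, F'.IsAcyclic → ∀ S : Set V,
    S.ncard ≤ n + (F'.connectedComponentMk '' S).ncard →
    ∃ A : Finset (Sym2 V), (A : Set (Sym2 V)) ⊆ F'.edgeSet ∧ A.card ≤ n ∧
      ∀ x ∈ S, ∀ y ∈ S, x ≠ y → ¬ (F'.deleteEdges (A : Set (Sym2 V))).Reachable x y := by
  induction n with
  | zero =>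
    intro F' hA S hS
    refine ⟨∅, by simp, le_refl _, ?_⟩
    intro x hx y hy hxy hreach
    rw [Finset.coe_empty, deleteEdges_empty] at hreach
    have himg : F'.connectedComponentMk '' S ⊆ F'.connectedComponentMk '' (S \ {y}) := by
      rintro c ⟨w, hwS, rfl⟩
      by_cases hwy : w = y
      · subst hwy
        exact ⟨x, ⟨hx, by simp [hxy]⟩, (ConnectedComponent.sound hreach)⟩
      · exact ⟨w, ⟨hwS, hwy⟩, rfl⟩
    have h1 : (F'.connectedComponentMk '' S).ncard ≤ (S \ {y}).ncard :=
      le_trans (Set.ncard_le_ncard himg (((S \ {y}).toFinite).image _))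
        (Set.ncard_image_le ((S \ {y}).toFinite))
    have h2 : (S \ {y}).ncard = S.ncard - 1 := Set.ncard_diff_singleton_of_mem hy
    have h3 : 1 ≤ S.ncard := (Set.ncard_pos S.toFinite).mpr ⟨y, hy⟩
    omega
  | succ n ih =>
    intro F' hA S hS
    by_cases htriv : ∀ x ∈ S, ∀ y ∈ S, x ≠ y → ¬ F'.Reachable x y
    · refine ⟨∅, by simp, by simp, ?_⟩
      intro x hx y hy hxy hreach
      rw [Finset.coe_empty, deleteEdges_empty] at hreach
      exact htriv x hx y hy hxy hreach
    · push_neg at htriv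
      obtain ⟨s, hsS, t, htS, hst, hr⟩ := htriv
      obtain ⟨p0⟩ := hr
      obtain ⟨w, hw⟩ := p0.toPath
      cases w with
      | nil => exact absurd rfl hst
      | @cons _ u _ hadj q =>
        set e : Sym2 V := s(s, u) with hedef
        have he : e ∈ F'.edgeSet := hadj
        set F'' : SimpleGraph V := F'.deleteEdges {e} with hF''def
        have hle : F'' ≤ F' := deleteEdges_le _
        have hA'' : F''.IsAcyclic := acyclic_mono' hle hA
        have heF'' : e ∉ F''.edgeSet := by
          rw [hF''def, edgeSet_deleteEdges]; simp
        have hnr : ¬ F''.Reachable s t := by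
          intro hr2
          obtain ⟨w2, hw2⟩ := hr2.some.toPath
          have hP2 : (w2.map (Hom.ofLE hle)).IsPath :=
            Walk.map_isPath_of_injective (fun _ _ h => h) hw2
          have heq := hA.path_unique ⟨SimpleGraph.Walk.cons hadj q, hw⟩
            ⟨w2.map (Hom.ofLE hle), hP2⟩
          have hmem : e ∈ (SimpleGraph.Walk.cons hadj q).edges := by
            rw [Walk.edges_cons]; exact List.mem_cons_self
          rw [Subtype.mk.injEq] at heq
          rw [heq] at hmem
          rw [Walk.edges_map] at hmem
          obtain ⟨e', he', heq'⟩ := List.mem_map.mp hmem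
          have : e' = e := by
            simpa [Hom.ofLE_apply, Sym2.map_id'] using heq'
          subst this
          exact heF'' (w2.edges_subset_edgeSet he')
        set ψ : F''.ConnectedComponent → F'.ConnectedComponent :=
          ConnectedComponent.map (Hom.ofLE hle) with hψdef
        have hψ : ∀ v : V, ψ (F''.connectedComponentMk v) = F'.connectedComponentMk v :=
          fun v => ConnectedComponent.map_mk _ _
        have hsurj : Set.SurjOn ψ ((F''.connectedComponentMk '' S) \ {F''.connectedComponentMk t})
            (F'.connectedComponentMk '' S) := by
          rintro c ⟨v, hvS, rfl⟩
          by_cases hvt : F''.Reachable v t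
          · refine ⟨F''.connectedComponentMk s, ⟨⟨s, hsS, rfl⟩, ?_⟩, ?_⟩
            · simp only [Set.mem_singleton_iff, ConnectedComponent.eq]
              exact hnr
            · rw [hψ]
              have hr1 : F'.Reachable v t := hvt.mono hle
              have hr2 : F'.Reachable s t := ⟨p0⟩
              exact ConnectedComponent.sound (hr2.trans hr1.symm)
          · refine ⟨F''.connectedComponentMk v, ⟨⟨v, hvS, rfl⟩, ?_⟩, hψ v⟩
            simp only [Set.mem_singleton_iff, ConnectedComponent.eq]
            exact hvt
        have hfin : ((F''.connectedComponentMk '' S) \ {F''.connectedComponentMk t}).Finite :=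
          (S.toFinite.image _).diff
        have h1 : (F'.connectedComponentMk '' S).ncard ≤
            ((F''.connectedComponentMk '' S) \ {F''.connectedComponentMk t}).ncard :=
          le_trans (Set.ncard_le_ncard hsurj (hfin.image ψ)) (Set.ncard_image_le hfin)
        have h2 : ((F''.connectedComponentMk '' S) \ {F''.connectedComponentMk t}).ncard
            = (F''.connectedComponentMk '' S).ncard - 1 :=
          Set.ncard_diff_singleton_of_mem ⟨t, htS, rfl⟩
        have h3 : 1 ≤ (F''.connectedComponentMk '' S).ncard :=
          (Set.ncard_pos (S.toFinite.image _)).mpr ⟨_, ⟨t, htS, rfl⟩⟩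
        have hS'' : S.ncard ≤ n + (F''.connectedComponentMk '' S).ncard := by omega
        obtain ⟨A', hA'sub, hA'card, hA'sep⟩ := ih F'' hA'' S hS''
        refine ⟨insert e A', ?_, ?_, ?_⟩
        · rw [Finset.coe_insert]
          intro f hf
          rcases hf with rfl | hf
          · exact he
          · exact (edgeSet_deleteEdges _ ▸ hA'sub hf).1
        · exact le_trans (Finset.card_insert_le _ _) (by omega)
        · have hEq : F'.deleteEdges ((insert e A' : Finset (Sym2 V)) : Set (Sym2 V))
              = F''.deleteEdges (A' : Set (Sym2 V)) := by
            rw [hF''def, deleteEdges_deleteEdges, Finset.coe_insert, Set.insert_eq]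
          rw [hEq]
          exact hA'sep

lemma restrict_adj {G : SimpleGraph V} {X : Set V} {u v : V} :
    (G.restrict X).Adj u v ↔ G.Adj u v ∧ u ∈ X ∧ v ∈ X := Iff.rfl

lemma mem_restrict_edgeSet {G : SimpleGraph V} {X : Set V} {e : Sym2 V} :
    e ∈ (G.restrict X).edgeSet ↔ e ∈ G.edgeSet ∧ ∀ v ∈ e, v ∈ X := by
  refine Sym2.inductionOn e ?_
  intro x y
  rw [mem_edgeSet, mem_edgeSet, restrict_adj]
  constructor
  · rintro ⟨h, hx, hy⟩
    refine ⟨h, ?_⟩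
    intro v hv; rw [Sym2.mem_iff] at hv; rcases hv with rfl | rfl <;> assumption
  · rintro ⟨h, hall⟩
    exact ⟨h, hall x (Sym2.mem_mk_left _ _), hall y (Sym2.mem_mk_right _ _)⟩

/-- for a connected graph `G` with a separation `(X, Y)` of order `k` and
a spanning tree `F` of `G`, there is a set `A` of at most `k - 1` edges of `F` such that
the vertices of `X ∩ Y` lie in pairwise different components of `F - A`, the graph
`G[X] ∪ (F - A)` has the same cycle space as `G[X]` (the trees of `F - A` create no new
cycles), and `bn(G[X] ∪ (F - A)) = bn(G[X])`. -/
theorem exists_edge_cut_of_spanning_tree (G : SimpleGraph V) (hG : G.Connected)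
    (X Y : Set V) (k : ℕ)
    (hXY : X ∪ Y = Set.univ) (hsep : ∀ x ∈ X \ Y, ∀ y ∈ Y \ X, ¬ G.Adj x y)
    (hk : (X ∩ Y).ncard = k)
    (F : SimpleGraph V) (hFG : F ≤ G) (hF : F.IsTree) :
    ∃ A : Finset (Sym2 V), (A : Set (Sym2 V)) ⊆ F.edgeSet ∧ A.card ≤ k - 1 ∧
      (∀ x ∈ X ∩ Y, ∀ y ∈ X ∩ Y, x ≠ y →
        ¬ (F.deleteEdges (A : Set (Sym2 V))).Reachable x y) ∧
      (∀ C : Finset (Sym2 V),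
        (G.restrict X ⊔ F.deleteEdges (A : Set (Sym2 V))).IsF2Cycle C ↔
          (G.restrict X).IsF2Cycle C) ∧
      (G.restrict X ⊔ F.deleteEdges (A : Set (Sym2 V))).bn = (G.restrict X).bn := by
  classical
  have hAc : F.IsAcyclic := hF.IsAcyclic
  have hS : (X ∩ Y).ncard ≤ (k - 1) + ((F.connectedComponentMk '' (X ∩ Y)).ncard) := by
    rcases Nat.eq_zero_or_pos k with hk0 | hkpos
    · rw [hk, hk0]; exact Nat.zero_le _
    · have hne : (X ∩ Y).Nonempty := by
        rw [← Set.ncard_pos (X ∩ Y).toFinite, hk]; exact hkpos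
      have h1 : 1 ≤ (F.connectedComponentMk '' (X ∩ Y)).ncard :=
        (Set.ncard_pos ((X ∩ Y).toFinite.image _)).mpr (hne.image _)
      omega
  obtain ⟨A, hAsub, hAcard, hAsep⟩ := sep_aux (k - 1) F hAc (X ∩ Y) hS
  set F'' : SimpleGraph V := F.deleteEdges (A : Set (Sym2 V)) with hF''def
  have hF''F : F'' ≤ F := deleteEdges_le _
  have hF''G : F'' ≤ G := le_trans hF''F hFG
  have hA'' : F''.IsAcyclic := acyclic_mono' hF''F hAc
  have hiff : ∀ C : Finset (Sym2 V),
      (G.restrict X ⊔ F'').IsF2Cycle C ↔ (G.restrict X).IsF2Cycle C := by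
    intro C
    constructor
    · rintro ⟨hCE, hCeven⟩
      refine ⟨?_, hCeven⟩
      set D := C.filter (fun e => ¬ ∀ v ∈ e, v ∈ X) with hDdef
      have hCE' : ∀ e ∈ C, e ∈ (G.restrict X).edgeSet ∨ e ∈ F''.edgeSet := by
        intro e he
        have h := hCE e he
        rw [edgeSet_sup] at h
        exact h
      have hD : (D : Set (Sym2 V)) ⊆ F''.edgeSet := by
        intro e he
        rw [Finset.mem_coe, hDdef, Finset.mem_filter] at he
        rcases hCE' e he.1 with h | h
        · exact absurd (fun v hv => (mem_restrict_edgeSet.mp h).2 v hv) he.2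
        · exact h
      have hodd_mem : ∀ v, Odd (degD D v) → v ∈ X ∩ Y := by
        intro v hv
        have hvpos : 0 < degD D v := by
          rcases hv with ⟨m, hm⟩; omega
        obtain ⟨e, heD, hve⟩ : ∃ e ∈ D, v ∈ e := by
          obtain ⟨e, he⟩ := Finset.card_pos.mp hvpos
          rw [Finset.mem_filter] at he
          exact ⟨e, he.1, he.2⟩
        have hvX : v ∈ X := by
          by_contra hvX
          have hfilt : D.filter (fun e => v ∈ e) = C.filter (fun e => v ∈ e) := by
            rw [hDdef, Finset.filter_filter]
            refine Finset.filter_congr fun e heC => ?_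
            constructor
            · exact fun h => h.2
            · exact fun h => ⟨fun hall => hvX (hall v h), h⟩
          rw [← Nat.not_even_iff_odd] at hv
          refine hv ?_
          unfold degD
          rw [hfilt]
          exact hCeven v
        refine ⟨hvX, ?_⟩
        have heD' := (Finset.mem_filter.mp heD).2
        obtain ⟨u, rfl⟩ : ∃ u, e = s(v, u) := Sym2.mem_iff_exists.mp hve
        have huX : u ∉ X := by
          by_contra huX
          refine heD' ?_
          intro w hw; rw [Sym2.mem_iff] at hw; rcases hw with rfl | rfl <;> assumption
        have hadj : G.Adj v u := hF''G (hD heD)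
        by_contra hvY
        have huY : u ∈ Y := by
          have := hXY.symm ▸ Set.mem_univ u
          rcases (Set.mem_union u X Y).mp (hXY ▸ Set.mem_univ u) with h | h
          · exact absurd h huX
          · exact h
        exact hsep v ⟨hvX, hvY⟩ u ⟨huY, huX⟩ hadj
      have key : ∀ a b : V, s(a, b) ∈ D → False := by
        intro a b hab
        have habF : s(a, b) ∈ F''.edgeSet := hD hab
        by_cases hex : ∃ w, F''.Reachable a w ∧ Odd (degD D w)
        · obtain ⟨w, hw1, hw2⟩ := hex
          refine parity_contradiction F'' D hD w hw2 ?_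
          intro v hvw hreach
          by_contra hveven
          rw [Nat.not_even_iff_odd] at hveven
          exact hAsep w (hodd_mem w hw2) v (hodd_mem v hveven) (Ne.symm hvw) hreach
        · push_neg at hex
          have heven : ∀ w, F''.Reachable a w → Even (degD D w) := by
            intro w hw
            by_contra h
            rw [Nat.not_even_iff_odd] at h
            exact hex w hw h
          have hbr : ¬ (F''.deleteEdges {s(a, b)}).Reachable a b :=
            (isBridge_iff.mp ((isAcyclic_iff_forall_edge_isBridge.mp hA'') habF))
          set D' := D.erase s(a, b) with hD'def
          have hmem : s(a, b) ∈ D.filter (fun e => a ∈ e) :=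
            Finset.mem_filter.mpr ⟨hab, Sym2.mem_mk_left _ _⟩
          refine parity_contradiction (F''.deleteEdges {s(a, b)}) D' ?_ a ?_ ?_
          · intro f hf
            rw [Finset.mem_coe, hD'def, Finset.mem_erase] at hf
            rw [edgeSet_deleteEdges]
            exact ⟨hD (Finset.mem_coe.mpr hf.2), by simp [hf.1]⟩
          · have hcard : degD D' a = degD D a - 1 := by
              unfold degD
              rw [hD'def, Finset.filter_erase, Finset.card_erase_of_mem hmem]
            rw [hcard]
            have hev := heven a (Reachable.refl a)
            have hpos : 0 < degD D a := Finset.card_pos.mpr ⟨_, hmem⟩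
            rw [Nat.even_iff] at hev
            rw [Nat.odd_iff]
            unfold degD at hev hpos ⊢
            omega
          · intro v hva hreach
            by_cases hvb : v = b
            · subst hvb; exact absurd hreach hbr
            · have hnotm : s(a, b) ∉ D.filter (fun e => v ∈ e) := by
                rw [Finset.mem_filter]
                rintro ⟨-, hmem'⟩
                rw [Sym2.mem_iff] at hmem'
                rcases hmem' with rfl | rfl
                · exact hva rfl
                · exact hvb rfl
              have hcard : degD D' v = degD D v := by
                unfold degD
                rw [hD'def, Finset.filter_erase, Finset.erase_eq_of_notMem hnotm]
              rw [hcard]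
              exact heven v (hreach.mono (deleteEdges_le _))
      have hDfalse : ∀ e ∈ D, False := fun e => Sym2.inductionOn e key
      intro e he
      rcases hCE' e he with h | h
      · exact h
      · have hallX : ∀ v ∈ e, v ∈ X := by
          by_contra hno
          exact hDfalse e (Finset.mem_filter.mpr ⟨he, hno⟩)
        rw [mem_restrict_edgeSet]
        exact ⟨edgeSet_mono hF''G h, hallX⟩
    · rintro ⟨hCE, hCev⟩
      exact ⟨fun e he => (edgeSet_mono le_sup_left) (hCE e he), hCev⟩
  have hfun : IsF2CycleIn ((G.restrict X ⊔ F'').edgeSet) = IsF2CycleIn ((G.restrict X).edgeSet) :=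
    funext fun C => propext (hiff C)
  refine ⟨A, hAsub, hAcard, hAsep, hiff, ?_⟩
  unfold SimpleGraph.bn bnSet GeneratesIn
  rw [hfun]
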